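/- Let E be an algebraically closed field of characteristic zero, G a group, V a finite-dimensional irreducible E-representation of G with dim V ≥ 2, and L a one-dimensional representation of G whose associated linear character χ has finite order N > 1. If V ≅ V ⊗ L as G-representations, then V is induced from a representation of some proper subgroup H of G containing Ker(χ). -/

import Mathlib

open scoped Classical in
theorem induced_of_iso_tensor_linear_char
    {E : Type} [Field E] [IsAlgClosed E] [CharZero E]
    {G : Type} [Group G]
    {V : Type} [AddCommGroup V] [Module E V] [FiniteDimensional E V]
    (ρ : Representation E G V)
    (hdim : 2 ≤ Module.finrank E V)
    (hirr : ∀ W : Submodule E V, (∀ g : G, ∀ v ∈ W, ρ g v ∈ W) → W = ⊥ ∨ W = ⊤)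
    (χ : G →* Eˣ) (N : ℕ) (hN : 1 < N) (hord : orderOf χ = N)
    (hiso : ∃ e : V ≃ₗ[E] V, ∀ (g : G) (v : V), e (ρ g v) = (χ g : E) • ρ g (e v)) :
    ∃ H : Subgroup G, χ.ker ≤ H ∧ H ≠ ⊤ ∧
      ∃ W : Submodule E V, (∀ h ∈ H, ∀ w ∈ W, ρ h w ∈ W) ∧
        DirectSum.IsInternal
          (fun σ : G ⧸ H => Submodule.map (ρ (Quotient.out σ)) W) := by
  obtain ⟨e, he⟩ := hiso
  set f : Module.End E V := (e : V →ₗ[E] V) with hf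
  have hnt : Nontrivial V := by
    have : 0 < Module.finrank E V := by omega
    exact Module.nontrivial_of_finrank_pos this
  -- an eigenvalue
  obtain ⟨μ₀, hμ₀⟩ := Module.End.exists_eigenvalue f
  have hμ₀ne : μ₀ ≠ 0 := by
    intro h0
    obtain ⟨v, hv⟩ := hμ₀.exists_hasEigenvector
    have hev : f v = μ₀ • v := hv.apply_eq_smul
    rw [h0, zero_smul] at hev
    exact hv.2 (e.injective (by simpa [hf] using hev))
  -- key lemma: ρ g maps eigenspaces to eigenspaces
  have key : ∀ (g : G) (μ : E), Submodule.map (ρ g) (Module.End.eigenspace f μ)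
      = Module.End.eigenspace f ((χ g : E) * μ) := by
    intro g μ
    apply le_antisymm
    · rintro _ ⟨v, hv, rfl⟩
      rw [SetLike.mem_coe, Module.End.mem_eigenspace_iff] at hv
      rw [Module.End.mem_eigenspace_iff]
      have : f (ρ g v) = (χ g : E) • ρ g (f v) := he g v
      rw [hv] at this
      rw [this, map_smul, smul_smul]
    · intro w hw
      rw [Module.End.mem_eigenspace_iff] at hw
      refine ⟨ρ g⁻¹ w, ?_, ?_⟩
      · rw [SetLike.mem_coe, Module.End.mem_eigenspace_iff]
        have h1 : f (ρ g⁻¹ w) = (χ g⁻¹ : E) • ρ g⁻¹ (f w) := he g⁻¹ w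
        rw [hw, map_smul] at h1
        have h2 : (χ g⁻¹ : E) = (χ g : E)⁻¹ := by
          rw [map_inv, Units.val_inv_eq_inv_val]
        rw [h1]
        rw [smul_smul]
        rw [h2]
        congr 1
        exact inv_mul_cancel_left₀ (Units.ne_zero (χ g)) μ
      · calc ρ g (ρ g⁻¹ w) = (ρ g * ρ g⁻¹) w := rfl
          _ = w := by rw [← map_mul, mul_inv_cancel, map_one]; rfl
  set H : Subgroup G := χ.ker with hH
  have hHne : H ≠ ⊤ := by
    intro h
    have : χ = 1 := by
      ext g
      have : g ∈ χ.ker := by rw [hH] at h; rw [h]; trivial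
      simpa using this
    rw [this, orderOf_one] at hord
    omega
  set c : G ⧸ H →* Eˣ := QuotientGroup.kerLift χ with hc
  have hcinj : Function.Injective c := QuotientGroup.kerLift_injective χ
  have hcout : ∀ σ : G ⧸ H, χ (Quotient.out σ) = c σ := by
    intro σ
    conv_rhs => rw [← QuotientGroup.out_eq' σ]
    rfl
  set W : Submodule E V := Module.End.eigenspace f μ₀ with hW
  refine ⟨H, le_refl _, hHne, W, ?_, ?_⟩
  · intro h hh w hw
    have : Submodule.map (ρ h) W = Module.End.eigenspace f ((χ h : E) * μ₀) := key h μ₀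
    have hχ1 : χ h = 1 := hh
    rw [hχ1] at this
    simp only [Units.val_one, one_mul] at this
    rw [← hW] at this
    rw [← this]
    exact ⟨w, hw, rfl⟩
  · have hfam : (fun σ : G ⧸ H => Submodule.map (ρ (Quotient.out σ)) W)
        = fun σ : G ⧸ H => Module.End.eigenspace f (μ₀ * (c σ : E)) := by
      funext σ
      rw [hW, key, hcout, mul_comm]
    rw [hfam]
    have hind : iSupIndep (fun σ : G ⧸ H => Module.End.eigenspace f (μ₀ * (c σ : E))) := by
      have hinj : Function.Injective (fun σ : G ⧸ H => μ₀ * (c σ : E)) := by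
        intro a b hab
        apply hcinj
        have : (c a : E) = c b := by
          exact mul_left_cancel₀ hμ₀ne hab
        exact Units.ext this
      exact (Module.End.eigenspaces_iSupIndep f).comp hinj
    have hsup : (⨆ σ : G ⧸ H, Module.End.eigenspace f (μ₀ * (c σ : E))) = ⊤ := by
      set S : Submodule E V := ⨆ σ : G ⧸ H, Module.End.eigenspace f (μ₀ * (c σ : E)) with hS
      have hinv : ∀ g : G, ∀ v ∈ S, ρ g v ∈ S := by
        intro g v hv
        rw [hS] at hv ⊢
        induction hv using Submodule.iSup_induction' with
        | mem σ x hx =>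
          apply Submodule.mem_iSup_of_mem (g • σ)
          have : ρ g x ∈ Submodule.map (ρ g) (Module.End.eigenspace f (μ₀ * (c σ : E))) :=
            ⟨x, hx, rfl⟩
          rw [key] at this
          have hcs : (χ g : E) * (μ₀ * (c σ : E)) = μ₀ * (c (g • σ) : E) := by
            have : c (g • σ) = χ g * c σ := by
              obtain ⟨a, rfl⟩ := QuotientGroup.mk_surjective σ
              have hgs : g • (QuotientGroup.mk a : G ⧸ H) = QuotientGroup.mk (g * a) := rfl
              rw [hgs]
              have h1 : c (QuotientGroup.mk (g * a)) = χ (g * a) := rfl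
              have h2 : c (QuotientGroup.mk a) = χ a := rfl
              rw [h1, h2, map_mul]
            rw [this]
            push_cast
            ring
          rwa [hcs] at this
        | zero => rw [map_zero]; exact Submodule.zero_mem _
        | add x y _ _ hx hy => rw [map_add]; exact Submodule.add_mem _ hx hy
      rcases hirr S hinv with h | h
      · exfalso
        have h1 : Module.End.eigenspace f (μ₀ * (c (1 : G ⧸ H) : E)) ≤ S :=
          le_iSup (fun σ : G ⧸ H => Module.End.eigenspace f (μ₀ * (c σ : E))) 1
        rw [h, le_bot_iff] at h1
        have : Module.End.eigenspace f μ₀ ≠ ⊥ := hμ₀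
        apply this
        rw [← h1]
        congr 1
        simp
      · exact h
    convert DirectSum.isInternal_submodule_of_iSupIndep_of_iSup_eq_top hind hsup
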